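/- arXiv:2401.11210 — 2 statements merged into one kernel-verified Lean document; each statement's English description precedes it below -/
import Mathlib

section
/- Let p be a prime and G an elementary abelian p-group of rank n ≥ 2 (so |G| = p^n), and work inside ℚ[G]. Then I ⊆ p·ℤ[G] (in particular I is an ideal of ℤ[G]), and J ∩ p·ℤ[G] = I. -/
open scoped Classical

noncomputable section

/-- The elementary abelian `p`-group of rank `n`, written multiplicatively. -/
abbrev EAG (p n : ℕ) : Type := Multiplicative (Fin n → ZMod p)

/-- The canonical ring homomorphism `ℤ[G] →+* ℚ[G]`. -/
def zgToQg (p n : ℕ) : MonoidAlgebra ℤ (EAG p n) →+* MonoidAlgebra ℚ (EAG p n) :=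
  ((MonoidAlgebra.lift ℤ (MonoidAlgebra ℚ (EAG p n)) (EAG p n))
    (MonoidAlgebra.of ℚ (EAG p n))).toRingHom

/-- `ℚ[G]` as an algebra over `ℤ[G]` via the canonical map. -/
noncomputable instance zgAlgebra (p n : ℕ) :
    Algebra (MonoidAlgebra ℤ (EAG p n)) (MonoidAlgebra ℚ (EAG p n)) :=
  (zgToQg p n).toAlgebra

/-- The idempotent `e_H = (1/|H|) ∑_{h ∈ H} h ∈ ℚ[G]` attached to a subgroup `H`. -/
def eIdem (p n : ℕ) [NeZero p] (H : Subgroup (EAG p n)) : MonoidAlgebra ℚ (EAG p n) :=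
  (Nat.card H : ℚ)⁻¹ • ∑ h : H, MonoidAlgebra.of ℚ (EAG p n) (h : EAG p n)

/-- The canonical image of `ℤ[G]` in `ℚ[G]`: the `ℤ`-span of the group elements. -/
def ZGimage (p n : ℕ) : Submodule ℤ (MonoidAlgebra ℚ (EAG p n)) :=
  Submodule.span ℤ (Set.range (MonoidAlgebra.of ℚ (EAG p n)))

/-- The maximal order `Γ = ∑_{H ≤ G} ℤ[G]·e_H`, as a `ℤ[G]`-submodule of `ℚ[G]`. -/
def GammaOrder (p n : ℕ) [NeZero p] :
    Submodule (MonoidAlgebra ℤ (EAG p n)) (MonoidAlgebra ℚ (EAG p n)) :=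
  Submodule.span (MonoidAlgebra ℤ (EAG p n)) (Set.range (eIdem p n))

/-- `J = |G|·Γ = p^n·Γ`. -/
def Jmod (p n : ℕ) [NeZero p] :
    Submodule (MonoidAlgebra ℤ (EAG p n)) (MonoidAlgebra ℚ (EAG p n)) :=
  Submodule.map
    (LinearMap.lsmul (MonoidAlgebra ℤ (EAG p n)) (MonoidAlgebra ℚ (EAG p n))
      ((p : MonoidAlgebra ℤ (EAG p n)) ^ n)) (GammaOrder p n)

/-- `I`: the `ℤ[G]`-submodule of `ℚ[G]` generated by `{|G|·e_H : H ≤ G, H ≠ G}`. -/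
def Imod (p n : ℕ) [NeZero p] :
    Submodule (MonoidAlgebra ℤ (EAG p n)) (MonoidAlgebra ℚ (EAG p n)) :=
  Submodule.span (MonoidAlgebra ℤ (EAG p n))
    {x | ∃ H : Subgroup (EAG p n), H ≠ ⊤ ∧ x = ((p : ℚ) ^ n) • eIdem p n H}

/-- `G̃ = ∑_{g ∈ G} g ∈ ℚ[G]`. -/
def Gtilde (p n : ℕ) [NeZero p] : MonoidAlgebra ℚ (EAG p n) :=
  ∑ g : EAG p n, MonoidAlgebra.of ℚ (EAG p n) g


set_option linter.unusedSectionVars false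

section Aux

variable (p n : ℕ) [Fact p.Prime]

/-- The sum of the elements of a subgroup, in `ℚ[G]`. -/
def sigmaH (H : Subgroup (EAG p n)) : MonoidAlgebra ℚ (EAG p n) :=
  ∑ h : H, MonoidAlgebra.of ℚ (EAG p n) (h : EAG p n)

lemma smul_eq_mul' (a : MonoidAlgebra ℤ (EAG p n)) (x : MonoidAlgebra ℚ (EAG p n)) :
    a • x = zgToQg p n a * x := by
  rw [Algebra.smul_def]; rfl

lemma zg_single (g : EAG p n) (c : ℤ) :
    zgToQg p n (MonoidAlgebra.single g c) = c • MonoidAlgebra.of ℚ (EAG p n) g := by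
  simp [zgToQg]

lemma card_G : Nat.card (EAG p n) = p ^ n := by
  simp [Nat.card_eq_fintype_card, ZMod.card]

lemma card_sub (H : Subgroup (EAG p n)) :
    ∃ k ≤ n, Nat.card H = p ^ k ∧ (H ≠ ⊤ → k < n) := by
  have hd : Nat.card H ∣ p ^ n := by
    rw [← card_G p n]; exact Subgroup.card_subgroup_dvd_card H
  obtain ⟨k, hk, hH⟩ := (Nat.dvd_prime_pow (Fact.out : p.Prime)).mp hd
  refine ⟨k, hk, hH, fun hne => ?_⟩
  rcases lt_or_eq_of_le hk with h | rfl
  · exact h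
  · exact absurd (Subgroup.eq_top_of_card_eq H (by rw [hH, card_G])) hne

lemma sigma_mem (H : Subgroup (EAG p n)) : sigmaH p n H ∈ ZGimage p n := by
  refine Submodule.sum_mem _ fun h _ => Submodule.subset_span ⟨(h : EAG p n), rfl⟩

lemma pn_smul_eIdem (H : Subgroup (EAG p n)) (k : ℕ) (hk : k ≤ n) (hc : Nat.card H = p ^ k) :
    ((p : ℚ) ^ n) • eIdem p n H = ((p : ℤ) ^ (n - k)) • sigmaH p n H := by
  have hp0 : (p : ℚ) ≠ 0 := Nat.cast_ne_zero.mpr (Fact.out : p.Prime).ne_zero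
  rw [eIdem, hc, smul_smul, ← sigmaH]
  rw [← Int.cast_smul_eq_zsmul ℚ]
  congr 1
  push_cast
  rw [← pow_sub₀ _ hp0 hk]

lemma ZG_mul_mem {x y : MonoidAlgebra ℚ (EAG p n)} (hx : x ∈ ZGimage p n)
    (hy : y ∈ ZGimage p n) : x * y ∈ ZGimage p n := by
  refine Submodule.span_induction (p := fun x _ => x * y ∈ ZGimage p n) ?_ ?_ ?_ ?_ hx
  · rintro _ ⟨g, rfl⟩
    refine Submodule.span_induction (p := fun y _ => _ * y ∈ ZGimage p n) ?_ ?_ ?_ ?_ hy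
    · rintro _ ⟨g', rfl⟩
      rw [← MonoidHom.map_mul]
      exact Submodule.subset_span ⟨g * g', rfl⟩
    · simp [Submodule.zero_mem]
    · intro a b _ _ ha hb; rw [mul_add]; exact Submodule.add_mem _ ha hb
    · intro c a _ ha; rw [mul_smul_comm]; exact Submodule.smul_mem _ _ ha
  · simp [Submodule.zero_mem]
  · intro a b _ _ ha hb; rw [add_mul]; exact Submodule.add_mem _ ha hb
  · intro c a _ ha; rw [smul_mul_assoc]; exact Submodule.smul_mem _ _ ha

lemma zg_mem (a : MonoidAlgebra ℤ (EAG p n)) : zgToQg p n a ∈ ZGimage p n := by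
  refine MonoidAlgebra.induction_on (motive := fun a => zgToQg p n a ∈ ZGimage p n) a ?_ ?_ ?_
  · intro g
    have : zgToQg p n (MonoidAlgebra.of ℤ (EAG p n) g)
        = MonoidAlgebra.of ℚ (EAG p n) g := by
      simp [zgToQg]
    rw [this]; exact Submodule.subset_span ⟨g, rfl⟩
  · intro f g hf hg; rw [map_add]; exact Submodule.add_mem _ hf hg
  · intro r f hf; rw [map_zsmul]; exact Submodule.smul_mem _ _ hf

lemma zg_smul_mem (a : MonoidAlgebra ℤ (EAG p n)) {x : MonoidAlgebra ℚ (EAG p n)}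
    (hx : x ∈ ZGimage p n) : a • x ∈ ZGimage p n := by
  rw [smul_eq_mul']
  exact ZG_mul_mem p n (zg_mem p n a) hx

lemma coeff_int {u : MonoidAlgebra ℚ (EAG p n)} (hu : u ∈ ZGimage p n) :
    ∃ z : ℤ, u.coeff 1 = (z : ℚ) := by
  refine Submodule.span_induction (p := fun u _ => ∃ z : ℤ, u.coeff 1 = (z : ℚ)) ?_ ?_ ?_ ?_ hu
  · rintro _ ⟨g, rfl⟩
    by_cases hg : g = 1
    · exact ⟨1, by simp [hg, MonoidAlgebra.of_apply, MonoidAlgebra.single_apply]⟩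
    · have hg' : ¬ (g = (1 : EAG p n)) := hg
      exact ⟨0, by simp [MonoidAlgebra.of_apply, MonoidAlgebra.single_apply, hg']⟩
  · exact ⟨0, by simp⟩
  · rintro a b _ _ ⟨za, ha⟩ ⟨zb, hb⟩
    exact ⟨za + zb, by rw [MonoidAlgebra.coeff_add, Finsupp.add_apply, ha, hb]; push_cast; ring⟩
  · rintro c a _ ⟨z, hz⟩
    exact ⟨c * z, by rw [MonoidAlgebra.coeff_smul_apply, hz, zsmul_eq_mul]; push_cast; ring⟩

lemma Gtilde_one : (Gtilde p n).coeff 1 = 1 := by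
  rw [Gtilde]
  rw [MonoidAlgebra.coeff_sum, Finsupp.finset_sum_apply]
  rw [Finset.sum_eq_single (1 : EAG p n)]
  · simp [MonoidAlgebra.of_apply, MonoidAlgebra.single_apply]
  · intro g _ hg
    simp [MonoidAlgebra.of_apply, MonoidAlgebra.single_apply, hg]
  · simp

lemma of_mul_Gtilde (g : EAG p n) :
    MonoidAlgebra.of ℚ (EAG p n) g * Gtilde p n = Gtilde p n := by
  rw [Gtilde, Finset.mul_sum]
  refine Fintype.sum_equiv (Equiv.mulLeft g) _ _ fun h => ?_
  rw [← MonoidHom.map_mul]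
  rfl

lemma smul_Gtilde (a : MonoidAlgebra ℤ (EAG p n)) :
    ∃ m : ℤ, a • Gtilde p n = m • Gtilde p n := by
  refine MonoidAlgebra.induction_on
    (motive := fun a => ∃ m : ℤ, a • Gtilde p n = m • Gtilde p n) a ?_ ?_ ?_
  · intro g
    refine ⟨1, ?_⟩
    rw [smul_eq_mul']
    have : zgToQg p n (MonoidAlgebra.of ℤ (EAG p n) g)
        = MonoidAlgebra.of ℚ (EAG p n) g := by simp [zgToQg]
    rw [this, of_mul_Gtilde, one_smul]
  · rintro f g ⟨mf, hf⟩ ⟨mg, hg⟩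
    exact ⟨mf + mg, by rw [add_smul, hf, hg, add_smul]⟩
  · rintro r f ⟨m, hm⟩
    exact ⟨r * m, by rw [smul_assoc, hm, smul_smul]⟩

lemma pownZG_smul (x : MonoidAlgebra ℚ (EAG p n)) :
    ((p : MonoidAlgebra ℤ (EAG p n)) ^ n) • x = ((p : ℚ) ^ n) • x := by
  rw [Algebra.smul_def, RingHom.algebraMap_toAlgebra, map_pow, map_natCast,
    Algebra.smul_def, map_pow, map_natCast]

lemma eIdem_top : ((p : ℚ) ^ n) • eIdem p n (⊤ : Subgroup (EAG p n)) = Gtilde p n := by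
  have h1 : (∑ h : (⊤ : Subgroup (EAG p n)), MonoidAlgebra.of ℚ (EAG p n) (h : EAG p n))
      = Gtilde p n := by
    rw [Gtilde]
    exact Fintype.sum_equiv Subgroup.topEquiv.toEquiv _ _ fun h => rfl
  have hp0 : (0 : ℚ) < (p : ℚ) := by
    exact_mod_cast (Fact.out : p.Prime).pos
  rw [eIdem, h1, smul_smul, Subgroup.card_top, card_G]
  push_cast
  rw [mul_inv_cancel₀ (by positivity), one_smul]

end Aux

section Aux2
variable (p n : ℕ) [Fact p.Prime]

lemma zsmul_comm' (c : ℤ) (a : MonoidAlgebra ℤ (EAG p n)) (y : MonoidAlgebra ℚ (EAG p n)) :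
    a • (c • y) = c • (a • y) := smul_comm a c y

variable (hn : 0 < n)

/-- Evaluation at coordinate 0, as a monoid hom. -/
def ev0 : EAG p n →* Multiplicative (ZMod p) where
  toFun g := Multiplicative.ofAdd (Multiplicative.toAdd g ⟨0, hn⟩)
  map_one' := rfl
  map_mul' _ _ := rfl

/-- The embedding of `ZMod p` in coordinate 0. -/
def iota (a : ZMod p) : EAG p n :=
  Multiplicative.ofAdd (fun i => if i = ⟨0, hn⟩ then a else (0 : ZMod p))

lemma toAdd_iota (a : ZMod p) : Multiplicative.toAdd (iota p n hn a) ⟨0, hn⟩ = a := by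
  simp [iota]

/-- The index-`p` subgroup: kernel of evaluation at coordinate 0. -/
def H0 : Subgroup (EAG p n) := (ev0 p n hn).ker

lemma mem_H0 (g : EAG p n) :
    g ∈ H0 p n hn ↔ Multiplicative.toAdd g ⟨0, hn⟩ = 0 := by
  rw [H0, MonoidHom.mem_ker]
  exact Iff.rfl

lemma H0_ne_top : H0 p n hn ≠ ⊤ := by
  haveI : Fact (1 < p) := ⟨(Fact.out : p.Prime).one_lt⟩
  intro h
  have : iota p n hn 1 ∈ H0 p n hn := h ▸ Subgroup.mem_top _
  rw [mem_H0, toAdd_iota] at this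
  exact one_ne_zero this

/-- The product decomposition `ZMod p × H0 ≃ G`. -/
def phi : ZMod p × H0 p n hn ≃ EAG p n where
  toFun x := iota p n hn x.1 * (x.2 : EAG p n)
  invFun g := ⟨Multiplicative.toAdd g ⟨0, hn⟩,
    ⟨g * (iota p n hn (Multiplicative.toAdd g ⟨0, hn⟩))⁻¹, by
      rw [mem_H0]
      show Multiplicative.toAdd g ⟨0, hn⟩ + (- Multiplicative.toAdd (iota p n hn _) ⟨0, hn⟩) = 0
      rw [toAdd_iota]; ring⟩⟩
  left_inv := by
    rintro ⟨a, h⟩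
    have hh := (mem_H0 p n hn (h : EAG p n)).mp h.2
    have key : Multiplicative.toAdd (iota p n hn a * (h : EAG p n)) ⟨0, hn⟩ = a := by
      show Multiplicative.toAdd (iota p n hn a) ⟨0, hn⟩
        + Multiplicative.toAdd (h : EAG p n) ⟨0, hn⟩ = a
      rw [toAdd_iota, hh, add_zero]
    refine Prod.ext ?_ (Subtype.ext ?_)
    · exact key
    · show iota p n hn a * (h : EAG p n)
        * (iota p n hn (Multiplicative.toAdd (iota p n hn a * (h : EAG p n)) ⟨0, hn⟩))⁻¹
        = (h : EAG p n)
      rw [key, mul_right_comm]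
      simp
  right_inv := by
    intro g
    show iota p n hn _ * (g * (iota p n hn _)⁻¹) = g
    rw [mul_comm g, ← mul_assoc]
    simp

lemma card_H0 : Nat.card (H0 p n hn) = p ^ (n - 1) := by
  have h1 : Nat.card (ZMod p × H0 p n hn) = Nat.card (EAG p n) :=
    Nat.card_congr (phi p n hn)
  rw [Nat.card_prod, Nat.card_zmod, card_G] at h1
  have hp : 0 < p := (Fact.out : p.Prime).pos
  have h2 : p ^ n = p * p ^ (n - 1) := by
    conv_lhs => rw [show n = (n - 1) + 1 by omega]
    rw [pow_succ]
    ring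
  rw [h2] at h1
  exact Nat.eq_of_mul_eq_mul_left hp h1

lemma sum_iota_mul_sigma :
    (∑ a : ZMod p, MonoidAlgebra.of ℚ (EAG p n) (iota p n hn a)) * sigmaH p n (H0 p n hn)
      = Gtilde p n := by
  rw [sigmaH, Finset.sum_mul]
  have hsplit : ∀ a : ZMod p,
      MonoidAlgebra.of ℚ (EAG p n) (iota p n hn a)
        * ∑ h : H0 p n hn, MonoidAlgebra.of ℚ (EAG p n) (h : EAG p n)
      = ∑ h : H0 p n hn, MonoidAlgebra.of ℚ (EAG p n) (iota p n hn a * (h : EAG p n)) := by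
    intro a
    rw [Finset.mul_sum]
    refine Finset.sum_congr rfl fun h _ => ?_
    rw [← MonoidHom.map_mul]
  simp_rw [hsplit]
  have h2 : ∑ x : ZMod p × H0 p n hn,
      MonoidAlgebra.of ℚ (EAG p n) (iota p n hn x.1 * (x.2 : EAG p n))
      = ∑ g : EAG p n, MonoidAlgebra.of ℚ (EAG p n) g :=
    Fintype.sum_equiv (phi p n hn) _ _ fun x => rfl
  rw [Fintype.sum_prod_type] at h2
  rw [Gtilde]
  exact h2

include hn in
lemma p_smul_Gtilde_mem : (p : ℤ) • Gtilde p n ∈ Imod p n := by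
  have hgen : ((p : ℚ) ^ n) • eIdem p n (H0 p n hn) ∈ Imod p n :=
    Submodule.subset_span ⟨H0 p n hn, H0_ne_top p n hn, rfl⟩
  have hb := Submodule.smul_mem (Imod p n)
    (∑ a : ZMod p, MonoidAlgebra.single (iota p n hn a) (1 : ℤ)) hgen
  have key : (∑ a : ZMod p, MonoidAlgebra.single (iota p n hn a) (1 : ℤ))
      • (((p : ℚ) ^ n) • eIdem p n (H0 p n hn)) = (p : ℤ) • Gtilde p n := by
    rw [pn_smul_eIdem p n _ (n - 1) (Nat.sub_le n 1) (card_H0 p n hn)]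
    have h1 : n - (n - 1) = 1 := by omega
    rw [h1, pow_one, zsmul_comm']
    congr 1
    rw [smul_eq_mul', map_sum]
    have hz : ∀ a : ZMod p, zgToQg p n (MonoidAlgebra.single (iota p n hn a) (1 : ℤ))
        = MonoidAlgebra.of ℚ (EAG p n) (iota p n hn a) := by
      intro a; rw [zg_single, one_smul]
    simp_rw [hz]
    exact sum_iota_mul_sigma p n hn
  rwa [key] at hb

end Aux2

/-- For `G` elementary abelian of rank `n ≥ 2`: `I ⊆ p·ℤ[G]` (in particular `I` is, by
construction, an ideal of `ℤ[G]`), and `J ∩ p·ℤ[G] = I`. -/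
theorem I_subset_pZG_and_J_inf_pZG_eq_I (p n : ℕ) [Fact p.Prime] (hn : 2 ≤ n) :
    (Imod p n).restrictScalars ℤ ≤
        Submodule.map (LinearMap.lsmul ℤ (MonoidAlgebra ℚ (EAG p n)) (p : ℤ)) (ZGimage p n) ∧
      (Jmod p n).restrictScalars ℤ ⊓
          Submodule.map (LinearMap.lsmul ℤ (MonoidAlgebra ℚ (EAG p n)) (p : ℤ)) (ZGimage p n) =
        (Imod p n).restrictScalars ℤ := by
  have hn0 : 0 < n := by omega
  set mapP := Submodule.map (LinearMap.lsmul ℤ (MonoidAlgebra ℚ (EAG p n)) (p : ℤ))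
    (ZGimage p n) with hmapP
  have mem_mapP : ∀ x : MonoidAlgebra ℚ (EAG p n),
      x ∈ mapP ↔ ∃ w ∈ ZGimage p n, (p : ℤ) • w = x := by
    intro x
    rw [hmapP, Submodule.mem_map]
    simp only [LinearMap.lsmul_apply]
  -- Claim 1 : I ⊆ p ℤ[G]
  have claim1 : ∀ x ∈ Imod p n, x ∈ mapP := by
    intro x hx
    refine Submodule.span_induction (p := fun x _ => x ∈ mapP) ?_ ?_ ?_ ?_ hx
    · rintro _ ⟨H, hH, rfl⟩
      obtain ⟨k, hk, hc, hlt⟩ := card_sub p n H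
      have hkn : k < n := hlt hH
      rw [pn_smul_eIdem p n H k hk hc]
      have h1 : (p : ℤ) ^ (n - k) = (p : ℤ) * (p : ℤ) ^ (n - k - 1) := by
        conv_lhs => rw [show n - k = 1 + (n - k - 1) by omega]
        rw [pow_add, pow_one]
      rw [h1, mul_smul, mem_mapP]
      exact ⟨(p : ℤ) ^ (n - k - 1) • sigmaH p n H,
        Submodule.smul_mem _ _ (sigma_mem p n H), rfl⟩
    · exact Submodule.zero_mem _
    · intro a b _ _ ha hb; exact Submodule.add_mem _ ha hb
    · intro a y _ hy
      rw [mem_mapP] at hy ⊢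
      obtain ⟨w, hw, rfl⟩ := hy
      exact ⟨a • w, zg_smul_mem p n a hw, (zsmul_comm' p n (p : ℤ) a w).symm⟩
  -- I ≤ J
  have hIJ : Imod p n ≤ Jmod p n := by
    rw [Imod]
    refine Submodule.span_le.mpr ?_
    rintro _ ⟨H, _, rfl⟩
    refine ⟨eIdem p n H, Submodule.subset_span ⟨H, rfl⟩, ?_⟩
    rw [LinearMap.lsmul_apply, pownZG_smul]
  -- J ≤ I ⊔ ℤ[G]·G̃
  have hJle : Jmod p n ≤ Imod p n ⊔
      Submodule.span (MonoidAlgebra ℤ (EAG p n)) {Gtilde p n} := by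
    rw [Jmod, Submodule.map_le_iff_le_comap, GammaOrder]
    refine Submodule.span_le.mpr ?_
    rintro _ ⟨H, rfl⟩
    rw [SetLike.mem_coe, Submodule.mem_comap, LinearMap.lsmul_apply, pownZG_smul]
    by_cases hH : H = ⊤
    · subst hH
      rw [eIdem_top]
      exact Submodule.mem_sup_right (Submodule.subset_span (Set.mem_singleton _))
    · exact Submodule.mem_sup_left (Submodule.subset_span ⟨H, hH, rfl⟩)
  refine ⟨fun x hx => claim1 x hx, le_antisymm ?_ fun x hx => ⟨hIJ hx, claim1 x hx⟩⟩
  rintro x ⟨hxJ, hxP⟩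
  obtain ⟨y, hy, z, hz, rfl⟩ := Submodule.mem_sup.mp (hJle hxJ)
  obtain ⟨a, rfl⟩ := Submodule.mem_span_singleton.mp hz
  obtain ⟨m, hm⟩ := smul_Gtilde p n a
  rw [hm] at hxP ⊢
  obtain ⟨w, hw, hxw⟩ := (mem_mapP _).mp hxP
  obtain ⟨v, hv, hyv⟩ := (mem_mapP _).mp (claim1 y hy)
  have hwv : m • Gtilde p n = (p : ℤ) • (w - v) := by
    rw [smul_sub, hyv, hxw]
    abel
  obtain ⟨z0, hz0⟩ := coeff_int p n (Submodule.sub_mem _ hw hv)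
  have happ : ∀ (c : ℤ) (u : MonoidAlgebra ℚ (EAG p n)), (c • u).coeff 1 = c • (u.coeff 1) :=
    fun c u => MonoidAlgebra.coeff_smul_apply c u 1
  have hcoeff : (m : ℚ) = (p : ℚ) * (z0 : ℚ) := by
    have h3 := congrArg (fun f : MonoidAlgebra ℚ (EAG p n) => f.coeff 1) hwv
    rw [happ, happ, Gtilde_one, hz0, zsmul_eq_mul, zsmul_eq_mul, mul_one] at h3
    rw [h3]
    push_cast
    ring
  have hmz : m = (p : ℤ) * z0 := by exact_mod_cast hcoeff
  have hmem : m • Gtilde p n ∈ (Imod p n).restrictScalars ℤ := by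
    rw [hmz, mul_comm, mul_smul]
    exact Submodule.smul_mem _ z0 (p_smul_Gtilde_mem p n hn0)
  exact Submodule.add_mem _ hy hmem

end
end

section
/- Let p be a prime and G an elementary abelian p-group of rank n ≥ 2 (so |G| = p^n), and work inside ℚ[G]. Then p·J ⊆ I ⊆ J, and moreover p^{n+1}·ℤ[G] ⊆ p·J. -/
open scoped Classical

noncomputable section

namespace PJaux
open MonoidAlgebra

variable (p n : ℕ)

lemma zg_smul (a : MonoidAlgebra ℤ (EAG p n)) (x : MonoidAlgebra ℚ (EAG p n)) :
    a • x = zgToQg p n a * x := rfl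

lemma zg_of (g : EAG p n) : zgToQg p n (of ℤ (EAG p n) g) = of ℚ (EAG p n) g := by
  simp [zgToQg]

lemma pPow_smul (m : ℕ) (x : MonoidAlgebra ℚ (EAG p n)) :
    ((p : MonoidAlgebra ℤ (EAG p n)) ^ m) • x = ((p : ℚ) ^ m) • x := by
  rw [zg_smul, map_pow, map_natCast, Algebra.smul_def, map_pow, map_natCast]

lemma card_G : Nat.card (EAG p n) = p ^ n := by
  show Nat.card (Fin n → ZMod p) = p ^ n
  simp [Nat.card_pi, Nat.card_zmod]

/-- The hyperplane `{f | f i = 0}`. -/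
def Hsub (i : Fin n) : Subgroup (EAG p n) where
  carrier := {f | f.toAdd i = 0}
  mul_mem' := by intro a b ha hb; simp_all [Set.mem_setOf_eq]
  one_mem' := by simp [Set.mem_setOf_eq]
  inv_mem' := by intro a ha; simp_all [Set.mem_setOf_eq]

/-- The line `{f | f j = 0 for j ≠ i}`. -/
def Ksub (i : Fin n) : Subgroup (EAG p n) where
  carrier := {f | ∀ j, j ≠ i → f.toAdd j = 0}
  mul_mem' := by intro a b ha hb j hj; simp_all [Set.mem_setOf_eq]
  one_mem' := by intro j hj; simp [Set.mem_setOf_eq]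
  inv_mem' := by intro a ha j hj; simp_all [Set.mem_setOf_eq]

def kal (i : Fin n) (x : ZMod p) : EAG p n := Multiplicative.ofAdd (Pi.single i x)

lemma kal_mem (i : Fin n) (x : ZMod p) : kal p n i x ∈ Ksub p n i := by
  intro j hj
  simp [kal, Pi.single_apply, hj]

lemma hal_mem (i : Fin n) (g : EAG p n) : g * (kal p n i (g.toAdd i))⁻¹ ∈ Hsub p n i := by
  show (g * (kal p n i (g.toAdd i))⁻¹).toAdd i = 0
  simp [kal, Pi.single_apply]

/-- `K × H ≃ G`. -/
def Edec (i : Fin n) : (Ksub p n i × Hsub p n i) ≃ EAG p n where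
  toFun x := (x.1 : EAG p n) * (x.2 : EAG p n)
  invFun g := (⟨kal p n i (g.toAdd i), kal_mem p n i _⟩,
               ⟨g * (kal p n i (g.toAdd i))⁻¹, hal_mem p n i g⟩)
  left_inv := by
    rintro ⟨⟨k, hk⟩, ⟨h, hh⟩⟩
    have h1 : kal p n i (k.toAdd i + h.toAdd i) = k := by
      have h0 : h.toAdd i = 0 := hh
      apply Multiplicative.toAdd.injective
      funext j
      by_cases hj : j = i
      · subst hj; simp [kal, Pi.single_apply, h0]
      · simp [kal, Pi.single_apply, hj, hk j hj]
    apply Prod.ext <;> apply Subtype.ext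
    · simpa using h1
    · show k * h * (kal p n i ((k * h).toAdd i))⁻¹ = h
      rw [toAdd_mul, Pi.add_apply, h1, mul_comm k h, mul_inv_cancel_right]
  right_inv := by
    intro g
    show kal p n i (g.toAdd i) * (g * (kal p n i (g.toAdd i))⁻¹) = g
    rw [mul_comm, inv_mul_cancel_right]

def keqv (i : Fin n) : ZMod p ≃ Ksub p n i where
  toFun x := ⟨kal p n i x, kal_mem p n i x⟩
  invFun k := (k : EAG p n).toAdd i
  left_inv x := by simp [kal]
  right_inv := by
    rintro ⟨k, hk⟩
    apply Subtype.ext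
    show kal p n i (k.toAdd i) = k
    apply Multiplicative.toAdd.injective
    funext j
    by_cases hj : j = i
    · subst hj; simp [kal]
    · simp [kal, Pi.single_apply, hj, hk j hj]

lemma card_K (i : Fin n) : Nat.card (Ksub p n i) = p := by
  rw [← Nat.card_congr (keqv p n i), Nat.card_zmod]

lemma card_H [Fact p.Prime] (hn : 1 ≤ n) (i : Fin n) :
    Nat.card (Hsub p n i) = p ^ (n - 1) := by
  have h1 := Nat.card_congr (Edec p n i)
  rw [Nat.card_prod, card_K, card_G] at h1
  have hp : 0 < p := (Fact.out : p.Prime).pos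
  have h2 : p ^ n = p * p ^ (n - 1) := by
    conv_lhs => rw [show n = (n - 1) + 1 by omega]
    ring
  exact Nat.eq_of_mul_eq_mul_left hp (h1.trans h2)

lemma Hsub_ne_top [Fact p.Prime] (i : Fin n) : Hsub p n i ≠ ⊤ := by
  haveI : Fact (1 < p) := ⟨(Fact.out : p.Prime).one_lt⟩
  intro h
  have h1 : kal p n i 1 ∈ Hsub p n i := h ▸ Subgroup.mem_top _
  have h2 : (kal p n i 1).toAdd i = 0 := h1
  simp [kal] at h2

lemma sum_mul_sum_eq [NeZero p] (i : Fin n) :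
    (∑ k : Ksub p n i, of ℚ (EAG p n) (k : EAG p n)) *
      (∑ h : Hsub p n i, of ℚ (EAG p n) (h : EAG p n)) =
    ∑ g : EAG p n, of ℚ (EAG p n) g := by
  rw [Finset.sum_mul_sum, ← Equiv.sum_comp (Edec p n i) (of ℚ (EAG p n)),
    Fintype.sum_prod_type]
  simp [Edec, map_mul]

lemma sum_top [NeZero p] :
    (∑ g : (⊤ : Subgroup (EAG p n)), of ℚ (EAG p n) (g : EAG p n)) =
      ∑ g : EAG p n, of ℚ (EAG p n) g :=
  Equiv.sum_comp (Equiv.subtypeUnivEquiv (fun x => Subgroup.mem_top x)) _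

lemma eIdem_bot [NeZero p] : eIdem p n ⊥ = 1 := by
  rw [eIdem, Subgroup.card_bot]
  simp only [Nat.cast_one, inv_one, one_smul]
  have h1 : ∀ h : (⊥ : Subgroup (EAG p n)), of ℚ (EAG p n) (h : EAG p n) = 1 := by
    rintro ⟨h, hh⟩
    rw [Subgroup.mem_bot] at hh
    simp [hh, MonoidAlgebra.one_def]
  refine (Finset.sum_congr rfl (fun x _ => h1 x)).trans ?_
  rw [Finset.sum_const]
  simp [Finset.card_univ, ← Nat.card_eq_fintype_card, Subgroup.card_bot]


lemma key [Fact p.Prime] (hn : 1 ≤ n) (i : Fin n) :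
    (∑ k : Ksub p n i, of ℤ (EAG p n) (k : EAG p n)) • ((p : ℚ) ^ n • eIdem p n (Hsub p n i))
      = ((p : ℚ) ^ (n + 1)) • eIdem p n ⊤ := by
  haveI : NeZero p := ⟨(Fact.out : p.Prime).pos.ne'⟩
  have hp0 : (p : ℚ) ≠ 0 := Nat.cast_ne_zero.mpr (Fact.out : p.Prime).pos.ne'
  rw [zg_smul, map_sum]
  simp only [zg_of]
  rw [eIdem, eIdem, card_H p n hn i, Subgroup.card_top, card_G]
  rw [mul_smul_comm, mul_smul_comm, sum_mul_sum_eq, smul_smul, smul_smul, sum_top]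
  congr 1
  push_cast
  field_simp
  rw [← pow_mul, ← pow_add]
  congr 1
  omega

end PJaux
open PJaux in
/-- For `G` elementary abelian of rank `n ≥ 2`: `p·J ⊆ I ⊆ J`, and moreover
`p^(n+1)·ℤ[G] ⊆ p·J`. -/
theorem pJ_subset_I_subset_J_and_pPowSuccZG_subset_pJ (p n : ℕ) [Fact p.Prime] (hn : 2 ≤ n) :
    Submodule.map
        (LinearMap.lsmul (MonoidAlgebra ℤ (EAG p n)) (MonoidAlgebra ℚ (EAG p n))
          (p : MonoidAlgebra ℤ (EAG p n))) (Jmod p n) ≤ Imod p n ∧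
      Imod p n ≤ Jmod p n ∧
      Submodule.map (LinearMap.lsmul ℤ (MonoidAlgebra ℚ (EAG p n)) ((p : ℤ) ^ (n + 1)))
          (ZGimage p n) ≤
        (Submodule.map
            (LinearMap.lsmul (MonoidAlgebra ℤ (EAG p n)) (MonoidAlgebra ℚ (EAG p n))
              (p : MonoidAlgebra ℤ (EAG p n))) (Jmod p n)).restrictScalars ℤ := by
  haveI : NeZero p := ⟨(Fact.out : p.Prime).pos.ne'⟩
  have i0 : Fin n := ⟨0, by omega⟩
  refine ⟨?_, ?_, ?_⟩
  · -- p·J ⊆ I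
    rw [Submodule.map_le_iff_le_comap, Jmod, Submodule.map_le_iff_le_comap, GammaOrder,
      Submodule.span_le]
    rintro _ ⟨H, rfl⟩
    simp only [SetLike.mem_coe, Submodule.mem_comap, LinearMap.lsmul_apply]
    by_cases hH : H = ⊤
    · subst hH
      have h1 : (p : MonoidAlgebra ℤ (EAG p n)) •
          (((p : MonoidAlgebra ℤ (EAG p n)) ^ n) • eIdem p n ⊤)
          = (∑ k : Ksub p n i0, MonoidAlgebra.of ℤ (EAG p n) (k : EAG p n)) •
            ((p : ℚ) ^ n • eIdem p n (Hsub p n i0)) := by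
        rw [key p n (by omega) i0, smul_smul, ← pow_succ', pPow_smul]
      rw [h1]
      exact Submodule.smul_mem _ _
        (Submodule.subset_span ⟨Hsub p n i0, Hsub_ne_top p n i0, rfl⟩)
    · rw [pPow_smul]
      exact Submodule.smul_mem _ _ (Submodule.subset_span ⟨H, hH, rfl⟩)
  · -- I ⊆ J
    rw [Imod, Submodule.span_le]
    rintro _ ⟨H, -, rfl⟩
    exact ⟨eIdem p n H, Submodule.subset_span ⟨H, rfl⟩,
      by rw [LinearMap.lsmul_apply, pPow_smul]⟩
  · -- p^(n+1)·ℤ[G] ⊆ p·J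
    rw [Submodule.map_le_iff_le_comap, ZGimage, Submodule.span_le]
    rintro _ ⟨g, rfl⟩
    simp only [SetLike.mem_coe, Submodule.mem_comap, LinearMap.lsmul_apply,
      Submodule.restrictScalars_mem]
    have h2 : ((p : ℤ) ^ (n + 1)) • MonoidAlgebra.of ℚ (EAG p n) g
        = (p : MonoidAlgebra ℤ (EAG p n)) •
          (((p : MonoidAlgebra ℤ (EAG p n)) ^ n) • MonoidAlgebra.of ℚ (EAG p n) g) := by
      rw [smul_smul, ← pow_succ', pPow_smul, ← Int.cast_smul_eq_zsmul ℚ]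
      push_cast
      rfl
    rw [h2]
    have h3 : MonoidAlgebra.of ℚ (EAG p n) g ∈ GammaOrder p n := by
      have h4 : MonoidAlgebra.of ℚ (EAG p n) g
          = (MonoidAlgebra.of ℤ (EAG p n) g) • eIdem p n ⊥ := by
        rw [eIdem_bot, zg_smul, mul_one, zg_of]
      rw [h4]
      exact Submodule.smul_mem _ _ (Submodule.subset_span ⟨⊥, rfl⟩)
    exact Submodule.mem_map_of_mem (Submodule.mem_map_of_mem h3)

end
end
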